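/- Let (X,d) be a metric space equipped with a second Hausdorff topology σ such that d is σ-sequentially lower semicontinuous. If a sequence (xₙ) in X converges to x in the metric d and every d-bounded sequence admits a σ-convergent subsequence, then xₙ converges to x in the topology σ. -/

import Mathlib

/-- if `d`-bounded sequences admit `σ`-convergent subsequences and the
distance is `σ`-sequentially lower semicontinuous, then metric convergence implies
`σ`-convergence. -/
theorem stmt4 {X : Type*} [MetricSpace X] (σ : TopologicalSpace X)
    (hH : @T2Space X σ)
    (hcpt : ∀ u : ℕ → X, Bornology.IsBounded (Set.range u) →
      ∃ φ : ℕ → ℕ, StrictMono φ ∧ ∃ z : X,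
        Filter.Tendsto (u ∘ φ) Filter.atTop (@nhds X σ z))
    (hlsc : ∀ (u : ℕ → X) (a b : X),
      Filter.Tendsto u Filter.atTop (@nhds X σ a) →
      dist a b ≤ Filter.liminf (fun n => dist (u n) b) Filter.atTop)
    (u : ℕ → X) (x : X)
    (hconv : Filter.Tendsto (fun n => dist (u n) x) Filter.atTop (nhds 0)) :
    Filter.Tendsto u Filter.atTop (@nhds X σ x) := by
  by_contra h
  obtain ⟨U, hU, hfreq⟩ := Filter.not_tendsto_iff_exists_frequently_notMem.1 h
  obtain ⟨φ, hφmono, hφ⟩ := Filter.extraction_of_frequently_atTop hfreq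
  -- the subsequence is bounded
  have hbdd : Bornology.IsBounded (Set.range (u ∘ φ)) := by
    obtain ⟨C, hC⟩ :=
      ((hconv.comp hφmono.tendsto_atTop).bddAbove_range).imp (fun C hC => hC)
    have hsub : Set.range (u ∘ φ) ⊆ Metric.closedBall x C := by
      rintro _ ⟨n, rfl⟩
      exact hC ⟨n, rfl⟩
    exact Metric.isBounded_closedBall.subset hsub
  obtain ⟨ψ, hψmono, z, hz⟩ := hcpt _ hbdd
  -- dist z x ≤ liminf dist (u (φ (ψ n))) x = 0
  have hdist0 : Filter.Tendsto (fun n => dist ((u ∘ φ ∘ ψ) n) x) Filter.atTop (nhds 0) :=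
    hconv.comp ((hφmono.comp hψmono).tendsto_atTop)
  have hle := hlsc (u ∘ φ ∘ ψ) z x hz
  rw [hdist0.liminf_eq] at hle
  have hzx : z = x := by
    have := dist_nonneg (x := z) (y := x)
    have : dist z x = 0 := le_antisymm hle this
    exact dist_eq_zero.1 this
  subst hzx
  -- but u ∘ φ ∘ ψ is eventually in U, contradiction with hφ
  have := hz.eventually (p := fun y => y ∈ U) (by exact hU)
  obtain ⟨n, hn⟩ := this.exists
  exact hφ (ψ n) hn
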